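/- Let (a_n)_{n≥0} be a sequence of nonnegative real numbers satisfying a_{n+1} ≤ (1 − α_n) a_n + α_n b_n for all n, where (α_n)_{n≥0} ⊂ (0,1) and (b_n)_{n≥0} is a real sequence. If ∑_{n=0}^∞ α_n = ∞ and limsup_{n→∞} b_n ≤ 0, then lim_{n→∞} a_n = 0. -/

import Mathlib

open Filter

/-- Xu's lemma: if `a (n+1) ≤ (1 - α n) * a n + α n * b n` with `a n ≥ 0`,
`α n ∈ (0,1)`, `∑ α n = ∞` and `limsup b n ≤ 0`, then `a n → 0`. -/
theorem xu_lemma (a b α : ℕ → ℝ)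
    (ha : ∀ n, 0 ≤ a n)
    (hα : ∀ n, α n ∈ Set.Ioo (0 : ℝ) 1)
    (hrec : ∀ n, a (n + 1) ≤ (1 - α n) * a n + α n * b n)
    (hsum : Tendsto (fun N => ∑ n ∈ Finset.range N, α n) atTop atTop)
    (hb : Filter.limsup (fun n => (b n : EReal)) atTop ≤ (0 : EReal)) :
    Tendsto a atTop (nhds 0) := by
  rw [Metric.tendsto_atTop]
  intro ε hε
  -- eventually b n < ε/2
  have hb' : ∀ᶠ n in atTop, b n < ε / 2 := by
    have h1 : limsup (fun n => (b n : EReal)) atTop < ((ε / 2 : ℝ) : EReal) :=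
      lt_of_le_of_lt hb (by exact_mod_cast (by positivity : (0 : ℝ) < ε / 2))
    filter_upwards [Filter.eventually_lt_of_limsup_lt h1] with n hn
    exact_mod_cast hn
  obtain ⟨N, hN⟩ := eventually_atTop.mp hb'
  set M := max (a N - ε / 2) 0 with hMdef
  have hM : 0 ≤ M := le_max_right _ _
  have key : ∀ m, a (N + m) - ε / 2 ≤
      Real.exp (-(∑ k ∈ Finset.range m, α (N + k))) * M := by
    intro m
    induction m with
    | zero =>
      simp only [Nat.add_zero, Finset.range_zero, Finset.sum_empty, neg_zero,
        Real.exp_zero, one_mul]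
      exact le_max_left _ _
    | succ m ih =>
      have hα1 := hα (N + m)
      have hbm : b (N + m) ≤ ε / 2 := (hN (N + m) (by omega)).le
      have h2 : a (N + m + 1) - ε / 2 ≤ (1 - α (N + m)) * (a (N + m) - ε / 2) := by
        have := hrec (N + m)
        nlinarith [hα1.1, hα1.2]
      have h3 : (1 - α (N + m)) * (a (N + m) - ε / 2) ≤
          (1 - α (N + m)) * (Real.exp (-(∑ k ∈ Finset.range m, α (N + k))) * M) :=
        mul_le_mul_of_nonneg_left ih (by linarith [hα1.2])
      have h4 : (1 - α (N + m)) * (Real.exp (-(∑ k ∈ Finset.range m, α (N + k))) * M) ≤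
          Real.exp (-(α (N + m))) * (Real.exp (-(∑ k ∈ Finset.range m, α (N + k))) * M) := by
        have h5 : 1 - α (N + m) ≤ Real.exp (-(α (N + m))) := by
          have := Real.add_one_le_exp (-(α (N + m))); linarith
        exact mul_le_mul_of_nonneg_right h5
          (mul_nonneg (Real.exp_pos _).le hM)
      have heq : Real.exp (-(α (N + m))) * (Real.exp (-(∑ k ∈ Finset.range m, α (N + k))) * M)
          = Real.exp (-(∑ k ∈ Finset.range (m + 1), α (N + k))) * M := by
        rw [Finset.sum_range_succ, neg_add, Real.exp_add]
        ring
      have hidx : N + (m + 1) = N + m + 1 := by omega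
      rw [hidx]
      calc a (N + m + 1) - ε / 2 ≤ _ := h2
        _ ≤ _ := h3
        _ ≤ _ := h4
        _ = _ := heq
  -- the sum tends to infinity
  have hS : Tendsto (fun m => ∑ k ∈ Finset.range m, α (N + k)) atTop atTop := by
    have heq : ∀ m, ∑ k ∈ Finset.range m, α (N + k)
        = (∑ i ∈ Finset.range (N + m), α i) + -(∑ i ∈ Finset.range N, α i) := by
      intro m
      rw [Finset.sum_range_add]
      ring
    have h1 : Tendsto (fun m => ∑ i ∈ Finset.range (N + m), α i) atTop atTop := by
      have := hsum.comp (tendsto_add_atTop_nat N)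
      simpa [Function.comp_def, Nat.add_comm] using this
    have h2 := tendsto_atTop_add_const_right atTop (-(∑ i ∈ Finset.range N, α i)) h1
    simpa only [← heq] using h2
  have hT : Tendsto (fun m => Real.exp (-(∑ k ∈ Finset.range m, α (N + k))) * M)
      atTop (nhds 0) := by
    have : Tendsto (fun m => Real.exp (-(∑ k ∈ Finset.range m, α (N + k)))) atTop (nhds 0) :=
      Real.tendsto_exp_atBot.comp (tendsto_neg_atTop_atBot.comp hS)
    simpa using this.mul_const M
  have := (hT.eventually (eventually_lt_nhds (by positivity : (0:ℝ) < ε / 2)))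
  obtain ⟨m0, hm0⟩ := eventually_atTop.mp this
  refine ⟨N + m0, fun n hn => ?_⟩
  have hkey := key (n - N)
  have hexp := hm0 (n - N) (by omega)
  rw [show N + (n - N) = n by omega] at hkey
  rw [Real.dist_eq, abs_of_nonneg (by linarith [ha n] : (0:ℝ) ≤ a n - 0)]
  simp only [sub_zero]
  linarith
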